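/- arXiv:2501.02205 — 3 statements merged into one kernel-verified Lean document; each statement's English description precedes it below -/
import Mathlib

section
/- Let P and Q be probability measures on a measurable space S, and let V : S → ℝ be a nonnegative measurable function that is integrable with respect to both P and Q and satisfies ∫ exp(V²) dQ < ∞. If the Kullback–Leibler divergence D_KL(P‖Q) is finite, then ∫ V dQ − ∫ V dP ≤ √2 · (1 + log ∫ exp(V²) dQ)^{1/2} · (D_KL(P‖Q))^{1/2}. -/
open MeasureTheory

lemma dv_aux {S : Type*} [MeasurableSpace S] (P Q : Measure S)
    [IsProbabilityMeasure P] [IsProbabilityMeasure Q]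
    (hac : P ≪ Q)
    (hKL : Integrable (fun s => Real.log ((P.rnDeriv Q s).toReal)) P)
    (g : S → ℝ) (hg : Measurable g) (B : ℝ) (hB : ∀ s, g s ≤ B)
    (hgP : Integrable g P) :
    ∫ s, g s ∂P ≤ (∫ s, Real.log ((P.rnDeriv Q s).toReal) ∂P)
      + Real.log (∫ s, Real.exp (g s) ∂Q) := by
  set f : S → ℝ := fun s => (P.rnDeriv Q s).toReal with hf
  have hfmeas : Measurable f := (Measure.measurable_rnDeriv P Q).ennreal_toReal
  have hfnn : ∀ s, 0 ≤ f s := fun s => ENNReal.toReal_nonneg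
  have hEg : Integrable (fun s => Real.exp (g s)) Q := by
    refine Integrable.mono' (integrable_const (Real.exp B)) hg.exp.aestronglyMeasurable ?_
    filter_upwards with s
    rw [Real.norm_eq_abs, abs_of_pos (Real.exp_pos _)]
    exact Real.exp_le_exp.mpr (hB s)
  set c := ∫ s, Real.exp (g s) ∂Q with hc
  have hcpos : 0 < c := integral_exp_pos hEg
  set φ : S → ℝ := fun s => Real.exp (g s) / f s with hφ
  have hfφ_le : ∀ s, f s • φ s ≤ Real.exp (g s) := by
    intro s
    rcases eq_or_ne (f s) 0 with h | h
    · simp [hφ, h, smul_eq_mul, (Real.exp_pos _).le]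
    · simp only [hφ, smul_eq_mul]
      rw [mul_div_cancel₀ _ h]
  have hfφ : Integrable (fun s => f s • φ s) Q := by
    refine Integrable.mono' (integrable_const (Real.exp B)) ?_ ?_
    · exact (hfmeas.smul (hg.exp.div hfmeas)).aestronglyMeasurable
    · filter_upwards with s
      rw [Real.norm_eq_abs, abs_of_nonneg (by
        simp only [smul_eq_mul]
        exact mul_nonneg (hfnn s) (div_nonneg (Real.exp_pos _).le (hfnn s)))]
      exact (hfφ_le s).trans (Real.exp_le_exp.mpr (hB s))
  have hφP_int : Integrable φ P := (integrable_rnDeriv_smul_iff hac).mp hfφ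
  have hφP_val : ∫ s, φ s ∂P = ∫ s, f s • φ s ∂Q := (integral_rnDeriv_smul hac).symm
  have hφP_le : ∫ s, φ s ∂P ≤ c := by
    rw [hφP_val, hc]
    exact integral_mono hfφ hEg hfφ_le
  have hfpos : ∀ᵐ s ∂P, 0 < f s := by
    have h1 : ∀ᵐ s ∂P, 0 < P.rnDeriv Q s := Measure.rnDeriv_pos hac
    have h2 : ∀ᵐ s ∂P, P.rnDeriv Q s < ⊤ := hac.ae_le (Measure.rnDeriv_lt_top P Q)
    filter_upwards [h1, h2] with s hs1 hs2
    exact ENNReal.toReal_pos hs1.ne' hs2.ne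
  have key : ∀ᵐ s ∂P, g s - Real.log (f s) ≤ φ s / c + (Real.log c - 1) := by
    filter_upwards [hfpos] with s hs
    have hφpos : 0 < φ s := div_pos (Real.exp_pos _) hs
    have h1 : Real.log (φ s / c) ≤ φ s / c - 1 :=
      Real.log_le_sub_one_of_pos (div_pos hφpos hcpos)
    rw [Real.log_div hφpos.ne' hcpos.ne'] at h1
    have h2 : Real.log (φ s) = g s - Real.log (f s) := by
      rw [hφ]
      simp only
      rw [Real.log_div (Real.exp_ne_zero _) hs.ne', Real.log_exp]
    linarith
  have hint : ∫ s, (g s - Real.log (f s)) ∂P ≤ ∫ s, (φ s / c + (Real.log c - 1)) ∂P := by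
    exact integral_mono_ae (hgP.sub hKL) ((hφP_int.div_const c).add (integrable_const _)) key
  rw [integral_sub hgP hKL] at hint
  rw [integral_add (hφP_int.div_const c) (integrable_const _), integral_div,
    integral_const, probReal_univ] at hint
  have : (∫ s, φ s ∂P) / c ≤ 1 := (div_le_one hcpos).mpr hφP_le
  simp only [ENNReal.toReal_one, one_smul] at hint
  linarith

lemma exp_neg_le_quad {u : ℝ} (hu : 0 ≤ u) :
    Real.exp (-u) ≤ 1 - u + u ^ 2 / 2 := by
  have hq : 1 + u + u ^ 2 / 2 ≤ Real.exp u := Real.quadratic_le_exp_of_nonneg hu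
  have hpos : 0 < 1 + u + u ^ 2 / 2 := by positivity
  have h1 : Real.exp (-u) ≤ 1 / (1 + u + u ^ 2 / 2) := by
    rw [Real.exp_neg]
    rw [inv_eq_one_div]
    exact one_div_le_one_div_of_le hpos hq
  refine h1.trans ?_
  rw [div_le_iff₀ hpos]
  nlinarith [sq_nonneg u, sq_nonneg (u ^ 2)]


/-- Let `P` and `Q` be probability measures on a measurable space `S`, and let `V : S → ℝ`
be a nonnegative measurable function integrable w.r.t. both `P` and `Q` with
`∫ exp(V²) dQ < ∞`. If the Kullback–Leibler divergence
`D_KL(P‖Q) = ∫ log (dP/dQ) dP` is finite, then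
`∫ V dQ − ∫ V dP ≤ √2 (1 + log ∫ exp(V²) dQ)^{1/2} (D_KL(P‖Q))^{1/2}`. -/
theorem stmt1 {S : Type*} [MeasurableSpace S] (P Q : Measure S)
    [IsProbabilityMeasure P] [IsProbabilityMeasure Q]
    (V : S → ℝ) (hV : Measurable V) (hV0 : ∀ s, 0 ≤ V s)
    (hVP : Integrable V P) (hVQ : Integrable V Q)
    (hexp : Integrable (fun s => Real.exp (V s ^ 2)) Q)
    (hac : P ≪ Q)
    (hKL : Integrable (fun s => Real.log ((P.rnDeriv Q s).toReal)) P) :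
    ∫ s, V s ∂Q - ∫ s, V s ∂P ≤
      Real.sqrt 2 * Real.sqrt (1 + Real.log (∫ s, Real.exp (V s ^ 2) ∂Q)) *
        Real.sqrt (∫ s, Real.log ((P.rnDeriv Q s).toReal) ∂P) := by
  set m := ∫ s, V s ∂Q with hm
  set EPV := ∫ s, V s ∂P with hEPV
  set K := ∫ s, Real.log ((P.rnDeriv Q s).toReal) ∂P with hK
  set M := ∫ s, Real.exp (V s ^ 2) ∂Q with hM
  set C := 1 + Real.log M with hC
  -- integrability of V^2 under Q
  have hV2Q : Integrable (fun s => V s ^ 2) Q := by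
    refine Integrable.mono' hexp (hV.pow_const 2).aestronglyMeasurable ?_
    filter_upwards with s
    rw [Real.norm_eq_abs, abs_of_nonneg (sq_nonneg _)]
    nlinarith [Real.add_one_le_exp (V s ^ 2)]
  set σ2 := ∫ s, V s ^ 2 ∂Q with hσ2
  clear_value m EPV K M C σ2
  have hσ2nn : 0 ≤ σ2 := by
    rw [hσ2]; exact integral_nonneg fun s => sq_nonneg _
  have hM1 : 1 ≤ M := by
    have : (1 : ℝ) = ∫ _, (1 : ℝ) ∂Q := by simp
    rw [this, hM]
    exact integral_mono (integrable_const 1) hexp fun s => Real.one_le_exp (sq_nonneg _)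
  have hMpos : 0 < M := lt_of_lt_of_le one_pos hM1
  have hC1 : 1 ≤ C := by
    have := Real.log_nonneg hM1
    rw [hC]; linarith
  have hCpos : 0 < C := lt_of_lt_of_le one_pos hC1
  -- σ2 ≤ log M
  have hσ2le : σ2 ≤ Real.log M := by
    have hpt : ∀ s, V s ^ 2 ≤ Real.exp (V s ^ 2) / M + (Real.log M - 1) := by
      intro s
      have h1 : Real.log (Real.exp (V s ^ 2) / M) ≤ Real.exp (V s ^ 2) / M - 1 :=
        Real.log_le_sub_one_of_pos (div_pos (Real.exp_pos _) hMpos)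
      rw [Real.log_div (Real.exp_ne_zero _) hMpos.ne', Real.log_exp] at h1
      linarith
    have hint : σ2 ≤ ∫ s, (Real.exp (V s ^ 2) / M + (Real.log M - 1)) ∂Q := by
      rw [hσ2]
      exact integral_mono hV2Q (by exact (hexp.div_const M).add (integrable_const _)) hpt
    rw [integral_add (hexp.div_const M) (integrable_const _), integral_div,
      integral_const, probReal_univ] at hint
    simp only [ENNReal.toReal_one, one_smul, ← hM] at hint
    rw [div_self hMpos.ne'] at hint
    linarith
  have hσ2C : σ2 ≤ C := by
    rw [hC]; linarith [hσ2le]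
  -- K ≥ 0
  have hK0 : 0 ≤ K := by
    have h := dv_aux P Q hac hKL (fun _ => 0) measurable_const 0 (fun _ => le_refl 0)
      (integrable_const 0)
    rw [hK]
    simpa using h
  -- key inequality
  have key : ∀ t : ℝ, 0 < t → m - EPV ≤ K / t + t * σ2 / 2 := by
    intro t ht
    set g : S → ℝ := fun s => t * (m - V s) with hg
    have hgmeas : Measurable g := (measurable_const.sub hV).const_mul t
    have hgB : ∀ s, g s ≤ t * m := fun s =>
      mul_le_mul_of_nonneg_left (sub_le_self m (hV0 s)) ht.le
    have hgP : Integrable g P := ((integrable_const m).sub hVP).const_mul t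
    have hdv := dv_aux P Q hac hKL g hgmeas (t * m) hgB hgP
    have hgint : ∫ s, g s ∂P = t * (m - EPV) := by
      rw [hg]
      rw [integral_const_mul, integral_sub (integrable_const m) hVP, integral_const,
        probReal_univ]
      simp [hEPV]
    -- bound on the exponential moment
    have hEg : Integrable (fun s => Real.exp (g s)) Q := by
      refine Integrable.mono' (integrable_const (Real.exp (t * m)))
        hgmeas.exp.aestronglyMeasurable ?_
      filter_upwards with s
      rw [Real.norm_eq_abs, abs_of_pos (Real.exp_pos _)]
      exact Real.exp_le_exp.mpr (hgB s)
    have hpt : ∀ s, Real.exp (g s) ≤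
        Real.exp (t * m) * (1 - t * V s + t ^ 2 * V s ^ 2 / 2) := by
      intro s
      have h1 : g s = t * m - t * V s := by rw [hg]; ring
      rw [h1, Real.exp_sub, div_eq_mul_inv, ← Real.exp_neg]
      have h2 : Real.exp (-(t * V s)) ≤ 1 - t * V s + (t * V s) ^ 2 / 2 :=
        exp_neg_le_quad (mul_nonneg ht.le (hV0 s))
      have h3 : (t * V s) ^ 2 / 2 = t ^ 2 * V s ^ 2 / 2 := by ring
      rw [h3] at h2
      exact mul_le_mul_of_nonneg_left h2 (Real.exp_pos _).le
    have h1 : Integrable (fun a => 1 - t * V a) Q := by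
      exact (integrable_const 1).sub (hVQ.const_mul t)
    have h2' : Integrable (fun a => t ^ 2 * V a ^ 2 / 2) Q := by
      exact (hV2Q.const_mul (t ^ 2)).div_const 2
    have hRint : Integrable
        (fun s => Real.exp (t * m) * (1 - t * V s + t ^ 2 * V s ^ 2 / 2)) Q := by
      exact (h1.add h2').const_mul _
    have e1 : ∫ a, (1 - t * V a) ∂Q = 1 - t * m := by
      rw [integral_sub (integrable_const 1) (hVQ.const_mul t), integral_const_mul,
        integral_const, probReal_univ]
      simp [hm]
    have e2 : ∫ a, t ^ 2 * V a ^ 2 / 2 ∂Q = t ^ 2 * σ2 / 2 := by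
      rw [integral_div, integral_const_mul, hσ2]
    have hsplit : ∫ a, (1 - t * V a + t ^ 2 * V a ^ 2 / 2) ∂Q
        = 1 - t * m + t ^ 2 * σ2 / 2 := by
      rw [integral_add h1 h2', e1, e2]
    have hcle : ∫ s, Real.exp (g s) ∂Q ≤
        Real.exp (t * m) * (1 - t * m + t ^ 2 * σ2 / 2) := by
      have h3 := integral_mono hEg hRint hpt
      rwa [integral_const_mul, hsplit] at h3
    set c := ∫ s, Real.exp (g s) ∂Q with hc
    set y := 1 - t * m + t ^ 2 * σ2 / 2 with hy
    have hcpos : 0 < c := by rw [hc]; exact integral_exp_pos hEg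
    clear_value c y
    have hypos : 0 < y := by
      by_contra h
      push_neg at h
      nlinarith [Real.exp_pos (t * m), hcle, hcpos]
    have hlogc : Real.log c ≤ t * m + (y - 1) := by
      have h1 : Real.log c ≤ Real.log (Real.exp (t * m) * y) :=
        Real.log_le_log hcpos hcle
      rw [Real.log_mul (Real.exp_ne_zero _) hypos.ne', Real.log_exp] at h1
      linarith [Real.log_le_sub_one_of_pos hypos]
    have hcomb : t * (m - EPV) ≤ K + t ^ 2 * σ2 / 2 := by
      rw [hgint] at hdv
      have : y - 1 = -(t * m) + t ^ 2 * σ2 / 2 := by rw [hy]; ring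
      rw [← hK] at hdv
      linarith
    have := (div_le_div_iff_of_pos_right ht).mpr hcomb
    calc m - EPV = t * (m - EPV) / t := by field_simp
      _ ≤ (K + t ^ 2 * σ2 / 2) / t := this
      _ = K / t + t * σ2 / 2 := by field_simp
  rcases eq_or_lt_of_le hK0 with hKz | hKpos
  · -- K = 0
    have hle0 : m - EPV ≤ 0 := by
      refine le_of_forall_pos_le_add fun ε hε => ?_
      have h := key (2 * ε / (σ2 + 1)) (by positivity)
      rw [← hKz] at h
      have h2 : (0 : ℝ) / (2 * ε / (σ2 + 1)) = 0 := by simp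
      rw [h2] at h
      have : 2 * ε / (σ2 + 1) * σ2 / 2 ≤ ε := by
        rw [div_mul_eq_mul_div, div_div]
        rw [div_le_iff₀ (by positivity)]
        nlinarith
      linarith
    rw [← hKz, Real.sqrt_zero, mul_zero]
    exact hle0
  · -- K > 0
    obtain ⟨t, ht, ht2⟩ : ∃ t : ℝ, 0 < t ∧ t ^ 2 = 2 * K / C :=
      ⟨Real.sqrt (2 * K / C), Real.sqrt_pos.mpr (by positivity),
        Real.sq_sqrt (by positivity)⟩
    have h2 : t ^ 2 * C = 2 * K := by rw [ht2]; field_simp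
    have h := key t ht
    have hb : K / t + t * σ2 / 2 ≤ K / t + t * C / 2 := by
      have := mul_le_mul_of_nonneg_left hσ2C ht.le
      linarith
    have hKt : K / t = t * C / 2 := by
      rw [div_eq_div_iff ht.ne' two_ne_zero]
      linear_combination -h2
    have hLval : K / t + t * C / 2 = t * C := by rw [hKt]; ring
    have hL2 : (t * C) ^ 2 = 2 * C * K := by
      rw [mul_pow, ht2]
      field_simp
    have hR : Real.sqrt 2 * Real.sqrt C * Real.sqrt K = Real.sqrt (2 * C * K) := by
      rw [← Real.sqrt_mul (by norm_num) C, ← Real.sqrt_mul (by positivity) K]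
    have hLeq : t * C = Real.sqrt (2 * C * K) := by
      rw [← hL2, Real.sqrt_sq (mul_nonneg ht.le hCpos.le)]
    rw [hR, ← hLeq]
    linarith
end

section
/- Let X be a measurable space, let κ and η be Markov kernels from X to X, let γ ∈ [0,1), let r : X → ℝ be a bounded measurable reward with 0 ≤ r ≤ r_max, and let μ₀ be a probability measure on X. For a kernel ζ and x ∈ X let P^ζ_x be the trajectory measure of the ζ-chain started at x, define V_ζ(x) := Σ_{n≥0} γ^n E_{P^ζ_x}[r(X_n)] and J(ζ) := ∫ V_ζ dμ₀, and let μ^η_t denote the law of X_t under the η-chain started from μ₀. Define G(x) := ∫ V_κ(y) η(x, dy) − ∫ V_κ(y) κ(x, dy). Then J(η) − J(κ) = Σ_{t≥0} γ^{t+1} ∫ G(x) dμ^η_t(x). -/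
open MeasureTheory ProbabilityTheory

/-- The `n`-step transition kernel of a time-homogeneous Markov chain with one-step
kernel `κ`; under the Ionescu–Tulcea trajectory measure `P^κ_x`, the law of `X n` is
`kIter κ n x`. -/
noncomputable def kIter {X : Type*} [MeasurableSpace X] (κ : Kernel X X) : ℕ → Kernel X X
  | 0 => Kernel.id
  | n + 1 => κ ∘ₖ kIter κ n

/-- The discounted value `V_κ(x) = Σ_{n≥0} γ^n E_{P^κ_x}[r(X_n)]`. -/
noncomputable def discVal {X : Type*} [MeasurableSpace X] (κ : Kernel X X) (γ : ℝ)
    (r : X → ℝ) (x : X) : ℝ :=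
  ∑' n : ℕ, γ ^ n * ∫ y, r y ∂(kIter κ n x)

/-- The objective `J(κ) = ∫ V_κ dμ₀`. -/
noncomputable def discJ {X : Type*} [MeasurableSpace X] (κ : Kernel X X) (γ : ℝ)
    (r : X → ℝ) (μ₀ : Measure X) : ℝ :=
  ∫ x, discVal κ γ r x ∂μ₀

/-- The law `μ^η_t` of `X_t` under the `η`-chain started from `μ₀`. -/
noncomputable def marginal {X : Type*} [MeasurableSpace X] (η : Kernel X X)
    (μ₀ : Measure X) (t : ℕ) : Measure X :=
  μ₀.bind (kIter η t)

section Aux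

open Filter Topology

variable {X : Type*} [MeasurableSpace X]

instance kIter_isMarkov (κ : Kernel X X) [IsMarkovKernel κ] (n : ℕ) :
    IsMarkovKernel (kIter κ n) := by
  induction n with
  | zero => rw [kIter]; infer_instance
  | succ n ih => rw [kIter]; infer_instance

lemma kIter_comm (κ : Kernel X X) [IsMarkovKernel κ] (n : ℕ) :
    κ ∘ₖ kIter κ n = kIter κ n ∘ₖ κ := by
  induction n with
  | zero => rw [kIter, Kernel.comp_id, Kernel.id_comp]
  | succ n ih => rw [kIter, Kernel.comp_assoc, ← ih]

lemma kIter_succ_right (κ : Kernel X X) [IsMarkovKernel κ] (n : ℕ) :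
    kIter κ (n + 1) = kIter κ n ∘ₖ κ := by
  rw [show kIter κ (n + 1) = κ ∘ₖ kIter κ n from (by rw [kIter]), kIter_comm]

lemma integrable_of_abs_le (ν : Measure X) [IsFiniteMeasure ν] {f : X → ℝ}
    (hf : Measurable f) {C : ℝ} (hC : ∀ x, |f x| ≤ C) : Integrable f ν :=
  (integrable_const C).mono' hf.aestronglyMeasurable
    (Filter.Eventually.of_forall fun x => by simpa [Real.norm_eq_abs] using hC x)

lemma measurable_kint (κ : Kernel X X) [IsSFiniteKernel κ] {f : X → ℝ} (hf : Measurable f) :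
    Measurable fun x => ∫ y, f y ∂(κ x) :=
  (MeasureTheory.StronglyMeasurable.integral_kernel_prod_right'
    (f := fun p : X × X => f p.2) ((hf.comp measurable_snd).stronglyMeasurable)).measurable

lemma kint_le (ν : Measure X) [IsProbabilityMeasure ν] {f : X → ℝ}
    (hf : Measurable f) (h0 : ∀ x, 0 ≤ f x) {C : ℝ} (hC : ∀ x, f x ≤ C) :
    ∫ y, f y ∂ν ≤ C := by
  calc ∫ y, f y ∂ν ≤ ∫ _, C ∂ν := by
        refine integral_mono ?_ (integrable_const C) hC
        exact integrable_of_abs_le ν hf (C := C) fun x =>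
          abs_le.2 ⟨le_trans (neg_nonpos.2 (le_trans (h0 x) (hC x))) (h0 x), hC x⟩
    _ = C := by simp

/-- Bochner-integral version of `Measure.lintegral_bind` for nonnegative bounded
measurable integrands. -/
lemma integral_bind_kernel (μ : Measure X) (κ : Kernel X X) [IsMarkovKernel κ]
    {f : X → ℝ} (hf : Measurable f) (h0 : ∀ x, 0 ≤ f x) {C : ℝ} (hC : ∀ x, f x ≤ C) :
    ∫ y, f y ∂(μ.bind κ) = ∫ x, ∫ y, f y ∂(κ x) ∂μ := by
  have hint : ∀ (ν : Measure X) [IsFiniteMeasure ν], Integrable f ν := fun ν _ =>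
    integrable_of_abs_le ν hf (C := C) fun x =>
      abs_le.2 ⟨le_trans (neg_nonpos.2 (le_trans (h0 x) (hC x))) (h0 x), hC x⟩
  rw [integral_eq_lintegral_of_nonneg_ae (Filter.Eventually.of_forall h0)
      hf.aestronglyMeasurable,
    integral_eq_lintegral_of_nonneg_ae
      (Filter.Eventually.of_forall fun x => integral_nonneg h0)
      (measurable_kint κ hf).aestronglyMeasurable,
    Measure.lintegral_bind κ.measurable.aemeasurable hf.ennreal_ofReal.aemeasurable]
  congr 1
  refine lintegral_congr fun x => ?_
  rw [← ofReal_integral_eq_lintegral_ofReal (hint (κ x)) (Filter.Eventually.of_forall h0)]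

variable {κ : Kernel X X} [IsMarkovKernel κ] {γ : ℝ} {r : X → ℝ} {rmax : ℝ}

lemma nstep_le (hr : Measurable r) (hr0 : ∀ x, 0 ≤ r x) (hrmax : ∀ x, r x ≤ rmax)
    (n : ℕ) (x : X) : ∫ y, r y ∂(kIter κ n x) ≤ rmax :=
  kint_le _ hr hr0 hrmax

lemma discVal_summable (hγ0 : 0 ≤ γ) (hγ1 : γ < 1) (hr : Measurable r)
    (hr0 : ∀ x, 0 ≤ r x) (hrmax : ∀ x, r x ≤ rmax) (x : X) :
    Summable fun n : ℕ => γ ^ n * ∫ y, r y ∂(kIter κ n x) := by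
  refine Summable.of_nonneg_of_le
    (fun n => mul_nonneg (pow_nonneg hγ0 n) (integral_nonneg hr0))
    (fun n => mul_le_mul_of_nonneg_left (nstep_le hr hr0 hrmax n x) (pow_nonneg hγ0 n))
    ((summable_geometric_of_lt_one hγ0 hγ1).mul_right rmax)

lemma discVal_nonneg (hγ0 : 0 ≤ γ) (hr0 : ∀ x, 0 ≤ r x) (x : X) : 0 ≤ discVal κ γ r x :=
  tsum_nonneg fun n => mul_nonneg (pow_nonneg hγ0 n) (integral_nonneg hr0)

lemma discVal_le (hγ0 : 0 ≤ γ) (hγ1 : γ < 1) (hr : Measurable r)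
    (hr0 : ∀ x, 0 ≤ r x) (hrmax : ∀ x, r x ≤ rmax) (x : X) :
    discVal κ γ r x ≤ (1 - γ)⁻¹ * rmax := by
  calc discVal κ γ r x ≤ ∑' n : ℕ, γ ^ n * rmax := by
        refine Summable.tsum_le_tsum (fun n => ?_) (discVal_summable hγ0 hγ1 hr hr0 hrmax x)
          ((summable_geometric_of_lt_one hγ0 hγ1).mul_right rmax)
        exact mul_le_mul_of_nonneg_left (nstep_le hr hr0 hrmax n x) (pow_nonneg hγ0 n)
    _ = (1 - γ)⁻¹ * rmax := by
        rw [tsum_mul_right, tsum_geometric_of_lt_one hγ0 hγ1]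

lemma discVal_meas (hγ0 : 0 ≤ γ) (hγ1 : γ < 1) (hr : Measurable r)
    (hr0 : ∀ x, 0 ≤ r x) (hrmax : ∀ x, r x ≤ rmax) :
    Measurable (discVal κ γ r) := by
  apply measurable_of_tendsto_metrizable
    (f := fun N x => ∑ n ∈ Finset.range N, γ ^ n * ∫ y, r y ∂(kIter κ n x))
  · intro N
    exact Finset.measurable_sum _ fun n _ => measurable_const.mul (measurable_kint _ hr)
  · rw [tendsto_pi_nhds]
    intro x
    exact (discVal_summable hγ0 hγ1 hr hr0 hrmax x).hasSum.tendsto_sum_nat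

lemma discVal_bellman (hγ0 : 0 ≤ γ) (hγ1 : γ < 1) (hr : Measurable r)
    (hr0 : ∀ x, 0 ≤ r x) (hrmax : ∀ x, r x ≤ rmax) (x : X) :
    discVal κ γ r x = r x + γ * ∫ y, discVal κ γ r y ∂(κ x) := by
  have h1 : ∀ n, ∫ y, r y ∂(kIter κ (n + 1) x)
      = ∫ z, (∫ y, r y ∂(kIter κ n z)) ∂(κ x) := by
    intro n
    rw [kIter_succ_right, Kernel.comp_apply]
    exact integral_bind_kernel (κ x) (kIter κ n) hr hr0 hrmax
  have key : ∑' n : ℕ, ∫ z, (γ ^ n * ∫ y, r y ∂(kIter κ n z)) ∂(κ x)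
      = ∫ z, discVal κ γ r z ∂(κ x) := by
    have hintn : ∀ n : ℕ,
        Integrable (fun z => γ ^ n * ∫ y, r y ∂(kIter κ n z)) (κ x) := by
      intro n
      refine integrable_of_abs_le _ (measurable_const.mul (measurable_kint _ hr))
        (C := γ ^ n * rmax) fun z => ?_
      rw [abs_mul, abs_pow, abs_of_nonneg hγ0, abs_of_nonneg (integral_nonneg hr0)]
      exact mul_le_mul_of_nonneg_left (nstep_le hr hr0 hrmax n z) (pow_nonneg hγ0 n)
    refine integral_tsum_of_summable_integral_norm hintn ?_
    refine Summable.of_nonneg_of_le (fun n => integral_nonneg fun z => norm_nonneg _)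
      (fun n => ?_) ((summable_geometric_of_lt_one hγ0 hγ1).mul_right rmax)
    calc ∫ z, ‖γ ^ n * ∫ y, r y ∂(kIter κ n z)‖ ∂(κ x)
        ≤ ∫ _, γ ^ n * rmax ∂(κ x) := by
          refine integral_mono ((hintn n).norm) (integrable_const _) fun z => ?_
          rw [Real.norm_eq_abs, abs_mul, abs_pow, abs_of_nonneg hγ0,
            abs_of_nonneg (integral_nonneg hr0)]
          exact mul_le_mul_of_nonneg_left (nstep_le hr hr0 hrmax n z) (pow_nonneg hγ0 n)
      _ = γ ^ n * rmax := by simp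
  have hzero : discVal κ γ r x
      = γ ^ 0 * (∫ y, r y ∂(kIter κ 0 x))
        + ∑' n : ℕ, γ ^ (n + 1) * ∫ y, r y ∂(kIter κ (n + 1) x) :=
    Summable.tsum_eq_zero_add (discVal_summable hγ0 hγ1 hr hr0 hrmax x)
  rw [hzero]
  congr 1
  · rw [show kIter κ 0 = (Kernel.id : Kernel X X) from (by rw [kIter])]
    rw [Kernel.id_apply, integral_dirac' r x hr.stronglyMeasurable, pow_zero, one_mul]
  · calc ∑' n : ℕ, γ ^ (n + 1) * ∫ y, r y ∂(kIter κ (n + 1) x)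
        = ∑' n : ℕ, γ * ∫ z, (γ ^ n * ∫ y, r y ∂(kIter κ n z)) ∂(κ x) := by
          refine tsum_congr fun n => ?_
          rw [h1 n, integral_const_mul]
          ring
      _ = γ * ∫ z, discVal κ γ r z ∂(κ x) := by rw [tsum_mul_left, key]

end Aux

/-- **Telescoping value-difference identity** (the paper's Lemma 3, from Yu et al.):
with `G(x) = ∫ V_κ dη(x,·) − ∫ V_κ dκ(x,·)` the one-step value-prediction gap,
`J(η) − J(κ) = Σ_{t≥0} γ^{t+1} ∫ G dμ^η_t`. -/
theorem stmt7 {X : Type*} [MeasurableSpace X]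
    (κ η : Kernel X X) [IsMarkovKernel κ] [IsMarkovKernel η]
    (γ : ℝ) (hγ0 : 0 ≤ γ) (hγ1 : γ < 1)
    (r : X → ℝ) (hr : Measurable r)
    (rmax : ℝ) (hr0 : ∀ x, 0 ≤ r x) (hrmax : ∀ x, r x ≤ rmax)
    (μ₀ : Measure X) [IsProbabilityMeasure μ₀]
    (G : X → ℝ)
    (hG : ∀ x, G x = (∫ y, discVal κ γ r y ∂(η x)) - ∫ y, discVal κ γ r y ∂(κ x)) :
    discJ η γ r μ₀ - discJ κ γ r μ₀
      = ∑' t : ℕ, γ ^ (t + 1) * ∫ x, G x ∂(marginal η μ₀ t) := by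
  classical
  open Filter Topology in
  -- nonemptiness and basic bounds
  have hXne : Nonempty X := by
    by_contra h
    rw [not_nonempty_iff] at h
    have h1 : μ₀ Set.univ = 1 := measure_univ
    rw [Set.univ_eq_empty_iff.mpr h, measure_empty] at h1
    exact zero_ne_one h1
  have hrm0 : 0 ≤ rmax := le_trans (hr0 (Classical.arbitrary X)) (hrmax _)
  set B : ℝ := (1 - γ)⁻¹ * rmax with hB
  have hB0 : 0 ≤ B := mul_nonneg (inv_nonneg.2 (by linarith)) hrm0
  set Vκ : X → ℝ := discVal κ γ r with hVκdef
  set Vη : X → ℝ := discVal η γ r with hVηdef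
  have hVκm : Measurable Vκ := discVal_meas hγ0 hγ1 hr hr0 hrmax
  have hVηm : Measurable Vη := discVal_meas hγ0 hγ1 hr hr0 hrmax
  have hVκ0 : ∀ x, 0 ≤ Vκ x := discVal_nonneg hγ0 hr0
  have hVη0 : ∀ x, 0 ≤ Vη x := discVal_nonneg hγ0 hr0
  have hVκB : ∀ x, Vκ x ≤ B := discVal_le hγ0 hγ1 hr hr0 hrmax
  have hVηB : ∀ x, Vη x ≤ B := discVal_le hγ0 hγ1 hr hr0 hrmax
  -- kernel integrals of the values
  have hKηη : Measurable fun x => ∫ y, Vη y ∂(η x) := measurable_kint η hVηm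
  have hKηκ : Measurable fun x => ∫ y, Vκ y ∂(η x) := measurable_kint η hVκm
  have hKκκ : Measurable fun x => ∫ y, Vκ y ∂(κ x) := measurable_kint κ hVκm
  have hKηη0 : ∀ x, 0 ≤ ∫ y, Vη y ∂(η x) := fun x => integral_nonneg hVη0
  have hKηκ0 : ∀ x, 0 ≤ ∫ y, Vκ y ∂(η x) := fun x => integral_nonneg hVκ0
  have hKκκ0 : ∀ x, 0 ≤ ∫ y, Vκ y ∂(κ x) := fun x => integral_nonneg hVκ0
  have hKηηB : ∀ x, ∫ y, Vη y ∂(η x) ≤ B := fun x => kint_le _ hVηm hVη0 hVηB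
  have hKηκB : ∀ x, ∫ y, Vκ y ∂(η x) ≤ B := fun x => kint_le _ hVκm hVκ0 hVκB
  have hKκκB : ∀ x, ∫ y, Vκ y ∂(κ x) ≤ B := fun x => kint_le _ hVκm hVκ0 hVκB
  have hGm : Measurable G := by
    have : G = fun x => (∫ y, Vκ y ∂(η x)) - ∫ y, Vκ y ∂(κ x) := funext hG
    rw [this]; exact hKηκ.sub hKκκ
  have hGb : ∀ x, |G x| ≤ B := fun x => by
    rw [hG x]
    exact abs_le.2 ⟨by linarith [hKηκ0 x, hKκκB x], by linarith [hKηκB x, hKκκ0 x]⟩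
  -- the marginals are probability measures
  set μt : ℕ → Measure X := marginal η μ₀ with hμtdef
  have hμt : ∀ t, IsProbabilityMeasure (μt t) := by
    intro t
    constructor
    rw [hμtdef, marginal, Measure.bind_apply MeasurableSet.univ (kIter η t).measurable.aemeasurable]
    simp [measure_univ]
  have hμ0 : μt 0 = μ₀ := by
    rw [hμtdef, marginal, show kIter η 0 = (Kernel.id : Kernel X X) from (by rw [kIter])]
    rw [show ⇑(Kernel.id : Kernel X X) = fun x => Measure.dirac x from
      funext fun x => Kernel.id_apply x]
    exact Measure.bind_dirac
  have marg_succ : ∀ t, μt (t + 1) = (μt t).bind η := by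
    intro t
    rw [hμtdef, marginal, marginal,
      show kIter η (t + 1) = η ∘ₖ kIter η t from (by rw [kIter]),
      Measure.bind_bind (kIter η t).measurable.aemeasurable η.measurable.aemeasurable]
    exact congrArg μ₀.bind (funext fun x => Kernel.comp_apply η (kIter η t) x)
  -- the two key sequences
  set a : ℕ → ℝ := fun t => ∫ x, G x ∂(μt t) with hadef
  set D : ℕ → ℝ := fun t => ∫ x, (Vη x - Vκ x) ∂(μt t) with hDdef
  have haB : ∀ t, |a t| ≤ B := by
    intro t
    haveI := hμt t
    calc |a t| = ‖∫ x, G x ∂(μt t)‖ := by rw [Real.norm_eq_abs]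
      _ ≤ B * ((μt t) Set.univ).toReal :=
        norm_integral_le_of_norm_le_const
          (Filter.Eventually.of_forall fun x => by simpa [Real.norm_eq_abs] using hGb x)
      _ = B := by simp [measure_univ]
  have hDB : ∀ t, |D t| ≤ B := by
    intro t
    haveI := hμt t
    calc |D t| = ‖∫ x, (Vη x - Vκ x) ∂(μt t)‖ := by rw [Real.norm_eq_abs]
      _ ≤ B * ((μt t) Set.univ).toReal := by
        refine norm_integral_le_of_norm_le_const
          (Filter.Eventually.of_forall fun x => ?_)
        rw [Real.norm_eq_abs]
        exact abs_le.2 ⟨by linarith [hVη0 x, hVκB x], by linarith [hVηB x, hVκ0 x]⟩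
      _ = B := by simp [measure_univ]
  -- one-step recursion
  have step : ∀ t, D t = γ * a t + γ * D (t + 1) := by
    intro t
    haveI := hμt t
    haveI := hμt (t + 1)
    have hpt : ∀ x, Vη x - Vκ x
        = γ * ((∫ y, Vη y ∂(η x)) - ∫ y, Vκ y ∂(η x)) + γ * G x := by
      intro x
      have hbη : Vη x = r x + γ * ∫ y, Vη y ∂(η x) :=
        discVal_bellman hγ0 hγ1 hr hr0 hrmax x
      have hbκ : Vκ x = r x + γ * ∫ y, Vκ y ∂(κ x) :=
        discVal_bellman hγ0 hγ1 hr hr0 hrmax x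
      rw [hbη, hbκ, hG x]
      ring
    have int1 : Integrable (fun x => ∫ y, Vη y ∂(η x)) (μt t) :=
      integrable_of_abs_le _ hKηη (C := B) fun x =>
        abs_le.2 ⟨by linarith [hKηη0 x], hKηηB x⟩
    have int2 : Integrable (fun x => ∫ y, Vκ y ∂(η x)) (μt t) :=
      integrable_of_abs_le _ hKηκ (C := B) fun x =>
        abs_le.2 ⟨by linarith [hKηκ0 x], hKηκB x⟩
    have intG : Integrable G (μt t) := integrable_of_abs_le _ hGm (C := B) hGb
    have e0 : D t = ∫ x, (γ * ((∫ y, Vη y ∂(η x)) - ∫ y, Vκ y ∂(η x)) + γ * G x) ∂(μt t) := by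
      rw [hDdef]
      exact integral_congr_ae (Filter.Eventually.of_forall hpt)
    have e1 : ∫ x, (γ * ((∫ y, Vη y ∂(η x)) - ∫ y, Vκ y ∂(η x)) + γ * G x) ∂(μt t)
        = γ * ((∫ x, (∫ y, Vη y ∂(η x)) ∂(μt t)) - ∫ x, (∫ y, Vκ y ∂(η x)) ∂(μt t))
          + γ * a t := by
      have intc : Integrable
          (fun x => γ * ((∫ y, Vη y ∂(η x)) - ∫ y, Vκ y ∂(η x))) (μt t) := by
        refine integrable_of_abs_le _ ((hKηη.sub hKηκ).const_mul γ) (C := γ * B) fun x => ?_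
        rw [abs_mul, abs_of_nonneg hγ0]
        refine mul_le_mul_of_nonneg_left ?_ hγ0
        exact abs_le.2 ⟨by linarith [hKηη0 x, hKηκB x], by linarith [hKηηB x, hKηκ0 x]⟩
      rw [integral_add intc (intG.const_mul γ),
        integral_const_mul, integral_const_mul, integral_sub int1 int2]
    have e2 : ∫ x, (∫ y, Vη y ∂(η x)) ∂(μt t) = ∫ y, Vη y ∂(μt (t + 1)) := by
      rw [marg_succ t]
      exact (integral_bind_kernel _ η hVηm hVη0 hVηB).symm
    have e3 : ∫ x, (∫ y, Vκ y ∂(η x)) ∂(μt t) = ∫ y, Vκ y ∂(μt (t + 1)) := by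
      rw [marg_succ t]
      exact (integral_bind_kernel _ η hVκm hVκ0 hVκB).symm
    have e4 : D (t + 1) = (∫ y, Vη y ∂(μt (t + 1))) - ∫ y, Vκ y ∂(μt (t + 1)) := by
      rw [hDdef]
      exact integral_sub
        (integrable_of_abs_le _ hVηm (C := B) fun x =>
          abs_le.2 ⟨by linarith [hVη0 x], hVηB x⟩)
        (integrable_of_abs_le _ hVκm (C := B) fun x =>
          abs_le.2 ⟨by linarith [hVκ0 x], hVκB x⟩)
    rw [e0, e1, e2, e3, ← e4]
    ring
  -- telescoping
  have tele : ∀ T, D 0 = (∑ t ∈ Finset.range T, γ ^ (t + 1) * a t) + γ ^ T * D T := by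
    intro T
    induction T with
    | zero => simp
    | succ T ih =>
      rw [ih, step T, Finset.sum_range_succ]
      ring
  -- summability
  have hsummable : Summable fun t : ℕ => γ ^ (t + 1) * a t := by
    refine Summable.of_norm (Summable.of_nonneg_of_le (fun t => norm_nonneg _)
      (fun t => ?_) ((summable_geometric_of_lt_one hγ0 hγ1).mul_right (γ * B)))
    rw [Real.norm_eq_abs, abs_mul, abs_pow, abs_of_nonneg hγ0]
    calc γ ^ (t + 1) * |a t| ≤ γ ^ (t + 1) * B :=
          mul_le_mul_of_nonneg_left (haB t) (pow_nonneg hγ0 _)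
      _ = γ ^ t * (γ * B) := by ring
  -- vanishing remainder
  have hlim : Filter.Tendsto (fun T => γ ^ T * D T) Filter.atTop (nhds 0) := by
    have h1 : Filter.Tendsto (fun T : ℕ => γ ^ T * B) Filter.atTop (nhds 0) := by
      simpa using (tendsto_pow_atTop_nhds_zero_of_lt_one hγ0 hγ1).mul_const B
    refine squeeze_zero_norm (a := fun T : ℕ => γ ^ T * B) (fun T => ?_) h1
    rw [Real.norm_eq_abs, abs_mul, abs_pow, abs_of_nonneg hγ0]
    exact mul_le_mul_of_nonneg_left (hDB T) (pow_nonneg hγ0 _)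
  -- conclude D 0 = tsum
  have hfinal : Filter.Tendsto
      (fun T => (∑ t ∈ Finset.range T, γ ^ (t + 1) * a t) + γ ^ T * D T)
      Filter.atTop (nhds ((∑' t : ℕ, γ ^ (t + 1) * a t) + 0)) :=
    (hsummable.hasSum.tendsto_sum_nat).add hlim
  have hD0 : D 0 = ∑' t : ℕ, γ ^ (t + 1) * a t := by
    have hconst : Filter.Tendsto (fun _ : ℕ => D 0) Filter.atTop
        (nhds ((∑' t : ℕ, γ ^ (t + 1) * a t) + 0)) := by
      refine Filter.Tendsto.congr (fun T => (tele T).symm) hfinal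
    have := tendsto_nhds_unique hconst (tendsto_const_nhds (x := D 0))
    rw [← this, add_zero]
  -- identify D 0 with the difference of objectives
  have hJ : discJ η γ r μ₀ - discJ κ γ r μ₀ = D 0 := by
    have hD0' : D 0 = ∫ x, (Vη x - Vκ x) ∂μ₀ := by
      rw [show D 0 = ∫ x, (Vη x - Vκ x) ∂(μt 0) from rfl, hμ0]
    rw [hD0', discJ, discJ, integral_sub
      (integrable_of_abs_le _ hVηm (C := B) fun x =>
        abs_le.2 ⟨by linarith [hVη0 x], hVηB x⟩)
      (integrable_of_abs_le _ hVκm (C := B) fun x =>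
        abs_le.2 ⟨by linarith [hVκ0 x], hVκB x⟩)]
  rw [hJ, hD0]
end

section
/- Let X be a measurable space, γ ∈ [0,1), r : X → ℝ a bounded measurable reward with 0 ≤ r ≤ r_max, μ₀ a probability measure on X, and λ ≥ γ. Let Π be an index set and, for each π ∈ Π, let κ_π and η_π be Markov kernels from X to X and u_π : X → ℝ a bounded measurable function with u_π ≥ 0 such that |∫ V_{κ_π}(y) η_π(x, dy) − ∫ V_{κ_π}(y) κ_π(x, dy)| ≤ u_π(x) for all x ∈ X, where V_{κ_π}(x) := Σ_{n≥0} γ^n E_{P^{κ_π}_x}[r(X_n)]. Write J(ζ) := ∫ V_ζ dμ₀, let μ^{η_π}_t be the law of X_t under the η_π-chain from μ₀, define the penalized objective J̃(π) := Σ_{t≥0} γ^t ∫ (r − λ·u_π) dμ^{η_π}_t and the penalty mass ε(π) := Σ_{t≥0} γ^t ∫ u_π dμ^{η_π}_t. If π̂ ∈ Π satisfies J̃(π̂) ≥ J̃(π) for all π ∈ Π, then for every π ∈ Π: J(κ_{π̂}) ≥ J(κ_π) − (λ + γ)·ε(π). -/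
open MeasureTheory ProbabilityTheory Filter Topology
open scoped ENNReal

namespace Stmt10Aux
variable {X : Type*} [MeasurableSpace X]

lemma integrable_bdd {μ : Measure X} [IsFiniteMeasure μ] {f : X → ℝ} (hm : Measurable f)
    {C : ℝ} (h : ∀ x, |f x| ≤ C) : Integrable f μ :=
  ⟨hm.aestronglyMeasurable,
    HasFiniteIntegral.of_bounded (C := C) (ae_of_all _ fun x => by simpa using h x)⟩

lemma meas_kint (κ : Kernel X X) [IsSFiniteKernel κ] {f : X → ℝ} (hm : Measurable f) :
    Measurable fun x => ∫ y, f y ∂κ x := by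
  have h : StronglyMeasurable (Function.uncurry fun (_ : X) (y : X) => f y) :=
    (hm.comp measurable_snd).stronglyMeasurable
  exact h.integral_kernel_prod_right.measurable

instance kIter_markov (κ : Kernel X X) [IsMarkovKernel κ] (n : ℕ) :
    IsMarkovKernel (kIter κ n) := by
  induction n with
  | zero => show IsMarkovKernel Kernel.id; infer_instance
  | succ n ih => show IsMarkovKernel (κ ∘ₖ kIter κ n); infer_instance

lemma kIter_succ' (κ : Kernel X X) [IsMarkovKernel κ] (n : ℕ) :
    kIter κ (n + 1) = kIter κ n ∘ₖ κ := by
  induction n with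
  | zero => show κ ∘ₖ Kernel.id = Kernel.id ∘ₖ κ; simp
  | succ n ih =>
      show κ ∘ₖ kIter κ (n+1) = kIter κ (n+1) ∘ₖ κ
      rw [ih, ← Kernel.comp_assoc, show κ ∘ₖ kIter κ n = kIter κ n ∘ₖ κ from ih]

lemma integral_bind_nonneg {μ : Measure X} (ξ : Kernel X X) [IsMarkovKernel ξ]
    {f : X → ℝ} (hm : Measurable f) (h0 : ∀ x, 0 ≤ f x) {C : ℝ} (hC : ∀ x, f x ≤ C) :
    ∫ y, f y ∂(μ.bind ξ) = ∫ x, ∫ y, f y ∂ξ x ∂μ := by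
  set g : X → ℝ≥0∞ := fun x => ∫⁻ y, ENNReal.ofReal (f y) ∂ξ x with hg
  have hg_meas : Measurable g := Measurable.lintegral_kernel hm.ennreal_ofReal
  have hg_le : ∀ x, g x ≤ ENNReal.ofReal C := fun x => by
    calc g x ≤ ∫⁻ y, ENNReal.ofReal C ∂ξ x :=
          lintegral_mono fun y => ENNReal.ofReal_le_ofReal (hC y)
      _ = ENNReal.ofReal C := by simp
  have hg_lt : ∀ x, g x < ⊤ := fun x => (hg_le x).trans_lt ENNReal.ofReal_lt_top
  have hinner : ∀ x, ∫ y, f y ∂ξ x = (g x).toReal := fun x =>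
    integral_eq_lintegral_of_nonneg_ae (ae_of_all _ h0) hm.aestronglyMeasurable
  rw [integral_eq_lintegral_of_nonneg_ae (ae_of_all _ h0) hm.aestronglyMeasurable,
    Measure.lintegral_bind ξ.measurable.aemeasurable hm.ennreal_ofReal.aemeasurable]
  simp_rw [hinner]
  rw [integral_toReal hg_meas.aemeasurable (ae_of_all _ hg_lt)]

end Stmt10Aux

namespace Stmt10Aux
variable {X : Type*} [MeasurableSpace X]

lemma abs_integral_le {μ : Measure X} [IsProbabilityMeasure μ] {f : X → ℝ} (hm : Measurable f)
    {C : ℝ} (h : ∀ x, |f x| ≤ C) : |∫ x, f x ∂μ| ≤ C := by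
  have hint : Integrable f μ := integrable_bdd hm h
  calc |∫ x, f x ∂μ| = ‖∫ x, f x ∂μ‖ := (Real.norm_eq_abs _).symm
    _ ≤ ∫ x, ‖f x‖ ∂μ := norm_integral_le_integral_norm f
    _ ≤ ∫ _x, C ∂μ := integral_mono hint.norm (integrable_const C)
        (fun x => by simpa [Real.norm_eq_abs] using h x)
    _ = C := by simp

section Val
variable (κ : Kernel X X) [IsMarkovKernel κ] {γ : ℝ} (hγ0 : 0 ≤ γ) (hγ1 : γ < 1)
  {r : X → ℝ} (hr : Measurable r) {rmax : ℝ} (hr0 : ∀ x, 0 ≤ r x) (hrmax : ∀ x, r x ≤ rmax)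

include hr0 in
lemma Rn_nonneg (n : ℕ) (x : X) : 0 ≤ ∫ y, r y ∂(kIter κ n x) :=
  integral_nonneg hr0

include hr hr0 hrmax in
lemma Rn_le (n : ℕ) (x : X) : ∫ y, r y ∂(kIter κ n x) ≤ rmax := by
  have hint : Integrable r (kIter κ n x) :=
    integrable_bdd hr (C := rmax) (fun x => by rw [abs_of_nonneg (hr0 x)]; exact hrmax x)
  calc ∫ y, r y ∂(kIter κ n x) ≤ ∫ _y, rmax ∂(kIter κ n x) :=
        integral_mono hint (integrable_const rmax) hrmax
    _ = rmax := by simp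

include hγ0 hγ1 hr hr0 hrmax in
lemma summable_val (x : X) : Summable fun n : ℕ => γ ^ n * ∫ y, r y ∂(kIter κ n x) := by
  refine Summable.of_nonneg_of_le
    (fun n => mul_nonneg (pow_nonneg hγ0 n) (Rn_nonneg κ hr0 n x))
    (fun n => mul_le_mul_of_nonneg_left (Rn_le κ hr hr0 hrmax n x) (pow_nonneg hγ0 n)) ?_
  exact (summable_geometric_of_lt_one hγ0 hγ1).mul_right rmax

include hγ0 hr0 in
lemma val_nonneg (x : X) : 0 ≤ discVal κ γ r x :=
  tsum_nonneg fun n => mul_nonneg (pow_nonneg hγ0 n) (Rn_nonneg κ hr0 n x)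

include hγ0 hγ1 hr hr0 hrmax in
lemma val_le (x : X) : discVal κ γ r x ≤ rmax * (1 - γ)⁻¹ := by
  have h := Summable.tsum_le_tsum
    (fun n => mul_le_mul_of_nonneg_left (Rn_le κ hr hr0 hrmax n x) (pow_nonneg hγ0 n))
    (summable_val κ hγ0 hγ1 hr hr0 hrmax x)
    ((summable_geometric_of_lt_one hγ0 hγ1).mul_right rmax)
  calc discVal κ γ r x ≤ ∑' n : ℕ, γ ^ n * rmax := h
    _ = (1 - γ)⁻¹ * rmax := by rw [tsum_mul_right, tsum_geometric_of_lt_one hγ0 hγ1]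
    _ = rmax * (1 - γ)⁻¹ := mul_comm _ _

include hγ0 hγ1 hr hr0 hrmax in
lemma val_abs (x : X) : |discVal κ γ r x| ≤ rmax * (1 - γ)⁻¹ := by
  rw [abs_of_nonneg (val_nonneg κ hγ0 hr0 x)]
  exact val_le κ hγ0 hγ1 hr hr0 hrmax x

include hγ0 hγ1 hr hr0 hrmax in
lemma val_meas : Measurable (discVal κ γ r) := by
  apply measurable_of_tendsto_metrizable
    (f := fun T x => ∑ n ∈ Finset.range T, γ ^ n * ∫ y, r y ∂(kIter κ n x))
  · exact fun T => Finset.measurable_sum _ fun n _ => (meas_kint (kIter κ n) hr).const_mul _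
  · rw [tendsto_pi_nhds]
    intro x
    exact (summable_val κ hγ0 hγ1 hr hr0 hrmax x).hasSum.tendsto_sum_nat

include hγ0 hγ1 hr hr0 hrmax in
lemma bellman (x : X) : discVal κ γ r x = r x + γ * ∫ y, discVal κ γ r y ∂(κ x) := by
  have hrm : 0 ≤ rmax := (hr0 x).trans (hrmax x)
  have h0 : γ ^ 0 * ∫ y, r y ∂(kIter κ 0 x) = r x := by
    show γ ^ 0 * ∫ y, r y ∂(Kernel.id x) = r x
    rw [Kernel.id_apply, integral_dirac' r x hr.stronglyMeasurable, pow_zero, one_mul]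
  have hstep : ∀ n : ℕ, γ ^ (n + 1) * ∫ y, r y ∂(kIter κ (n + 1) x)
      = γ * (γ ^ n * ∫ z, (∫ y, r y ∂(kIter κ n z)) ∂(κ x)) := by
    intro n
    rw [kIter_succ', Kernel.comp_apply,
      integral_bind_nonneg (kIter κ n) hr hr0 hrmax,
      pow_succ, mul_comm (γ ^ n) γ, mul_assoc]
  have hswap : ∫ z, discVal κ γ r z ∂(κ x)
      = ∑' n : ℕ, γ ^ n * ∫ z, (∫ y, r y ∂(kIter κ n z)) ∂(κ x) := by
    have hmeas : ∀ n : ℕ, AEStronglyMeasurable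
        (fun z => γ ^ n * ∫ y, r y ∂(kIter κ n z)) (κ x) := fun n =>
      ((meas_kint (kIter κ n) hr).const_mul _).aestronglyMeasurable
    have hbound : ∀ n : ℕ, ∫⁻ z, ‖γ ^ n * ∫ y, r y ∂(kIter κ n z)‖₊ ∂(κ x)
        ≤ ENNReal.ofReal (γ ^ n * rmax) := by
      intro n
      have : ∀ z, (‖γ ^ n * ∫ y, r y ∂(kIter κ n z)‖₊ : ℝ≥0∞)
          ≤ ENNReal.ofReal (γ ^ n * rmax) := fun z => by
        rw [← enorm_eq_nnnorm, Real.enorm_eq_ofReal (mul_nonneg (pow_nonneg hγ0 n) (Rn_nonneg κ hr0 n z))]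
        exact ENNReal.ofReal_le_ofReal
          (mul_le_mul_of_nonneg_left (Rn_le κ hr hr0 hrmax n z) (pow_nonneg hγ0 n))
      calc ∫⁻ z, ‖γ ^ n * ∫ y, r y ∂(kIter κ n z)‖₊ ∂(κ x)
          ≤ ∫⁻ _z, ENNReal.ofReal (γ ^ n * rmax) ∂(κ x) := lintegral_mono this
        _ = ENNReal.ofReal (γ ^ n * rmax) := by simp
    have hne : (∑' n : ℕ, ∫⁻ z, ‖γ ^ n * ∫ y, r y ∂(kIter κ n z)‖₊ ∂(κ x)) ≠ ⊤ := by
      refine ((ENNReal.tsum_le_tsum hbound).trans_lt ?_).ne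
      rw [← ENNReal.ofReal_tsum_of_nonneg (fun n => mul_nonneg (pow_nonneg hγ0 n) hrm)
        ((summable_geometric_of_lt_one hγ0 hγ1).mul_right rmax)]
      exact ENNReal.ofReal_lt_top
    simp only [discVal]
    rw [integral_tsum hmeas hne]
    exact tsum_congr fun n => integral_const_mul _ _
  rw [show discVal κ γ r x = ∑' n : ℕ, γ ^ n * ∫ y, r y ∂(kIter κ n x) from rfl,
    Summable.tsum_eq_zero_add (summable_val κ hγ0 hγ1 hr hr0 hrmax x), h0]
  congr 1
  simp_rw [hstep]
  rw [tsum_mul_left, hswap]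
end Val

instance marginal_prob (η : Kernel X X) [IsMarkovKernel η] (μ₀ : Measure X)
    [IsProbabilityMeasure μ₀] (t : ℕ) : IsProbabilityMeasure (marginal η μ₀ t) := by
  constructor
  rw [marginal, Measure.bind_apply MeasurableSet.univ (Kernel.measurable _).aemeasurable]
  simp

lemma marginal_zero (η : Kernel X X) (μ₀ : Measure X) : marginal η μ₀ 0 = μ₀ := by
  rw [marginal]
  show μ₀.bind ⇑(Kernel.id : Kernel X X) = μ₀
  have : ⇑(Kernel.id : Kernel X X) = Measure.dirac := funext fun x => Kernel.id_apply x
  rw [this, Measure.bind_dirac]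

lemma marginal_succ (η : Kernel X X) [IsMarkovKernel η] (μ₀ : Measure X) (t : ℕ) :
    marginal η μ₀ (t + 1) = (marginal η μ₀ t).bind η := by
  rw [marginal, marginal, Measure.bind_bind (Kernel.measurable _).aemeasurable (Kernel.measurable _).aemeasurable]
  rfl

end Stmt10Aux

/-- **Suboptimality inequality for the uncertainty-penalized maximizer** (key step of the
paper's Theorem 4): for each policy `p`, `κ p` is the physical-system chain, `η p` the
digital-twin chain and `u p ≥ 0` a bounded measurable bound on the one-step
value-prediction gap; if `phat` maximizes the penalized objective
`J̃(p) = Σ_t γ^t ∫ (r − λ·u p) dμ^{η p}_t` (with `λ ≥ γ`), then for every `p`,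
`J(κ phat) ≥ J(κ p) − (λ+γ)·ε(p)` where `ε(p) = Σ_t γ^t ∫ u p dμ^{η p}_t`. -/
theorem stmt10 {X : Type*} [MeasurableSpace X]
    (γ : ℝ) (hγ0 : 0 ≤ γ) (hγ1 : γ < 1)
    (r : X → ℝ) (hr : Measurable r)
    (rmax : ℝ) (hr0 : ∀ x, 0 ≤ r x) (hrmax : ∀ x, r x ≤ rmax)
    (μ₀ : Measure X) [IsProbabilityMeasure μ₀]
    (lam : ℝ) (hlam : γ ≤ lam)
    {P : Type*} (κ η : P → Kernel X X)
    [∀ p, IsMarkovKernel (κ p)] [∀ p, IsMarkovKernel (η p)]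
    (u : P → X → ℝ) (hum : ∀ p, Measurable (u p)) (hub : ∀ p, ∃ C, ∀ x, |u p x| ≤ C)
    (hu0 : ∀ p x, 0 ≤ u p x)
    (hgap : ∀ p x, |(∫ y, discVal (κ p) γ r y ∂(η p x))
      - ∫ y, discVal (κ p) γ r y ∂(κ p x)| ≤ u p x)
    (tJ : P → ℝ)
    (htJ : ∀ p, tJ p = ∑' t : ℕ, γ ^ t * ∫ x, (r x - lam * u p x) ∂(marginal (η p) μ₀ t))
    (eps : P → ℝ)
    (heps : ∀ p, eps p = ∑' t : ℕ, γ ^ t * ∫ x, u p x ∂(marginal (η p) μ₀ t))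
    (phat : P) (hopt : ∀ p, tJ p ≤ tJ phat) :
    ∀ p, discJ (κ p) γ r μ₀ - (lam + γ) * eps p ≤ discJ (κ phat) γ r μ₀ := by
  classical
  have hne : Nonempty X := by
    by_contra h
    have h1 : μ₀ Set.univ = 1 := measure_univ
    rw [Set.univ_eq_empty_iff.mpr (not_nonempty_iff.mp h), measure_empty] at h1
    exact zero_ne_one h1
  obtain ⟨x₀⟩ := hne
  set Vmax : ℝ := rmax * (1 - γ)⁻¹ with hVmaxdef
  have heps0 : ∀ q, 0 ≤ eps q := by
    intro q
    rw [heps]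
    exact tsum_nonneg fun t => mul_nonneg (pow_nonneg hγ0 t) (integral_nonneg (hu0 q))
  have fact : ∀ q, |discJ (κ q) γ r μ₀ - (tJ q + lam * eps q)| ≤ γ * eps q := by
    intro q
    obtain ⟨Cu, hCu⟩ := hub q
    set V : X → ℝ := discVal (κ q) γ r with hV
    have hVmeas : Measurable V := Stmt10Aux.val_meas (κ q) hγ0 hγ1 hr hr0 hrmax
    have hVnn : ∀ x, 0 ≤ V x := Stmt10Aux.val_nonneg (κ q) hγ0 hr0
    have hVle : ∀ x, V x ≤ Vmax := Stmt10Aux.val_le (κ q) hγ0 hγ1 hr hr0 hrmax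
    have hVabs : ∀ x, |V x| ≤ Vmax := Stmt10Aux.val_abs (κ q) hγ0 hγ1 hr hr0 hrmax
    set Pκ : X → ℝ := fun x => ∫ y, V y ∂(κ q x) with hPκ
    set Pη : X → ℝ := fun x => ∫ y, V y ∂(η q x) with hPη
    have hPκm : Measurable Pκ := Stmt10Aux.meas_kint (κ q) hVmeas
    have hPηm : Measurable Pη := Stmt10Aux.meas_kint (η q) hVmeas
    have hPκabs : ∀ x, |Pκ x| ≤ Vmax := fun x => Stmt10Aux.abs_integral_le hVmeas hVabs
    have hPηabs : ∀ x, |Pη x| ≤ Vmax := fun x => Stmt10Aux.abs_integral_le hVmeas hVabs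
    have hdiffabs : ∀ x, |Pκ x - Pη x| ≤ u q x := fun x => by
      rw [abs_sub_comm]; exact hgap q x
    have hdiffCu : ∀ x, |Pκ x - Pη x| ≤ Cu := fun x =>
      (hdiffabs x).trans ((le_abs_self _).trans (hCu x))
    have hrabs : ∀ x, |r x| ≤ rmax := fun x => by
      rw [abs_of_nonneg (hr0 x)]; exact hrmax x
    have hCu0 : 0 ≤ Cu := (abs_nonneg _).trans (hCu x₀)
    set R : ℕ → ℝ := fun t => γ ^ t * ∫ x, r x ∂(marginal (η q) μ₀ t) with hR
    set U : ℕ → ℝ := fun t => γ ^ t * ∫ x, u q x ∂(marginal (η q) μ₀ t) with hU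
    set G : ℕ → ℝ := fun t => γ ^ (t+1) * ∫ x, (Pκ x - Pη x) ∂(marginal (η q) μ₀ t) with hG
    set b : ℕ → ℝ := fun t => γ ^ t * ∫ x, V x ∂(marginal (η q) μ₀ t) with hb
    have hint_r : ∀ t, Integrable r (marginal (η q) μ₀ t) := fun t =>
      Stmt10Aux.integrable_bdd hr hrabs
    have hint_u : ∀ t, Integrable (u q) (marginal (η q) μ₀ t) := fun t =>
      Stmt10Aux.integrable_bdd (hum q) hCu
    have hint_Pκ : ∀ t, Integrable Pκ (marginal (η q) μ₀ t) := fun t =>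
      Stmt10Aux.integrable_bdd hPκm hPκabs
    have hint_Pη : ∀ t, Integrable Pη (marginal (η q) μ₀ t) := fun t =>
      Stmt10Aux.integrable_bdd hPηm hPηabs
    have hstep : ∀ t, b t = R t + G t + b (t+1) := by
      intro t
      have hbell : ∫ x, V x ∂(marginal (η q) μ₀ t)
          = (∫ x, r x ∂(marginal (η q) μ₀ t)) + γ * ∫ x, Pκ x ∂(marginal (η q) μ₀ t) := by
        have h1 : ∀ x, V x = r x + γ * Pκ x := fun x =>
          Stmt10Aux.bellman (κ q) hγ0 hγ1 hr hr0 hrmax x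
        calc ∫ x, V x ∂(marginal (η q) μ₀ t)
            = ∫ x, (r x + γ * Pκ x) ∂(marginal (η q) μ₀ t) :=
              integral_congr_ae (ae_of_all _ h1)
          _ = (∫ x, r x ∂(marginal (η q) μ₀ t)) + ∫ x, γ * Pκ x ∂(marginal (η q) μ₀ t) :=
              integral_add (hint_r t) ((hint_Pκ t).const_mul γ)
          _ = (∫ x, r x ∂(marginal (η q) μ₀ t)) + γ * ∫ x, Pκ x ∂(marginal (η q) μ₀ t) := by
              rw [integral_const_mul]
      have hnext : ∫ x, V x ∂(marginal (η q) μ₀ (t+1))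
          = ∫ x, Pη x ∂(marginal (η q) μ₀ t) := by
        rw [Stmt10Aux.marginal_succ,
          Stmt10Aux.integral_bind_nonneg (η q) hVmeas hVnn hVle]
      have hsub : ∫ x, (Pκ x - Pη x) ∂(marginal (η q) μ₀ t)
          = (∫ x, Pκ x ∂(marginal (η q) μ₀ t)) - ∫ x, Pη x ∂(marginal (η q) μ₀ t) :=
        integral_sub (hint_Pκ t) (hint_Pη t)
      simp only [hb, hR, hG]
      rw [hbell, hnext, hsub]
      ring
    have hRsum : Summable R := by
      refine Summable.of_nonneg_of_le
        (fun t => mul_nonneg (pow_nonneg hγ0 t) (integral_nonneg hr0))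
        (fun t => mul_le_mul_of_nonneg_left
          ((abs_le.mp (Stmt10Aux.abs_integral_le hr hrabs)).2) (pow_nonneg hγ0 t))
        ((summable_geometric_of_lt_one hγ0 hγ1).mul_right rmax)
    have hUsum : Summable U := by
      refine Summable.of_nonneg_of_le
        (fun t => mul_nonneg (pow_nonneg hγ0 t) (integral_nonneg (hu0 q)))
        (fun t => mul_le_mul_of_nonneg_left
          ((abs_le.mp (Stmt10Aux.abs_integral_le (hum q) hCu)).2) (pow_nonneg hγ0 t))
        ((summable_geometric_of_lt_one hγ0 hγ1).mul_right Cu)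
    have hGle : ∀ t, |G t| ≤ γ * U t := by
      intro t
      have h1 : |∫ x, (Pκ x - Pη x) ∂(marginal (η q) μ₀ t)|
          ≤ ∫ x, u q x ∂(marginal (η q) μ₀ t) := by
        have h2 : |∫ x, (Pκ x - Pη x) ∂(marginal (η q) μ₀ t)|
            ≤ ∫ x, |Pκ x - Pη x| ∂(marginal (η q) μ₀ t) := by
          simpa [Real.norm_eq_abs] using
            norm_integral_le_integral_norm (μ := marginal (η q) μ₀ t)
              (fun x => Pκ x - Pη x)
        refine h2.trans (integral_mono ((hint_Pκ t).sub (hint_Pη t)).abs (hint_u t) hdiffabs)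
      simp only [hG, hU]
      rw [abs_mul, abs_pow, abs_of_nonneg hγ0]
      calc γ ^ (t+1) * |∫ x, (Pκ x - Pη x) ∂(marginal (η q) μ₀ t)|
          ≤ γ ^ (t+1) * ∫ x, u q x ∂(marginal (η q) μ₀ t) :=
            mul_le_mul_of_nonneg_left h1 (pow_nonneg hγ0 _)
        _ = γ * (γ ^ t * ∫ x, u q x ∂(marginal (η q) μ₀ t)) := by ring
    have hGnorm : Summable fun t => ‖G t‖ :=
      Summable.of_nonneg_of_le (fun t => norm_nonneg _)
        (fun t => by rw [Real.norm_eq_abs]; exact hGle t) (hUsum.mul_left γ)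
    have hGsum : Summable G := hGnorm.of_norm
    have hbT : Filter.Tendsto b Filter.atTop (nhds 0) := by
      have habs : ∀ T, ‖b T‖ ≤ γ ^ T * Vmax := by
        intro T
        rw [Real.norm_eq_abs]
        simp only [hb]
        rw [abs_mul, abs_pow, abs_of_nonneg hγ0]
        exact mul_le_mul_of_nonneg_left (Stmt10Aux.abs_integral_le hVmeas hVabs)
          (pow_nonneg hγ0 T)
      exact squeeze_zero_norm habs
        (by simpa using (tendsto_pow_atTop_nhds_zero_of_lt_one hγ0 hγ1).mul_const Vmax)
    have hpartial : ∀ T, ∑ t ∈ Finset.range T, (R t + G t) = b 0 - b T := by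
      intro T
      induction T with
      | zero => simp
      | succ T ih => rw [Finset.sum_range_succ, ih]; linarith [hstep T]
    have hb0 : b 0 = discJ (κ q) γ r μ₀ := by
      simp only [hb]
      rw [pow_zero, one_mul, Stmt10Aux.marginal_zero]
      rfl
    have hsum_b0 : (∑' t : ℕ, (R t + G t)) = b 0 := by
      have h1 : Filter.Tendsto (fun T => ∑ t ∈ Finset.range T, (R t + G t))
          Filter.atTop (nhds (b 0 - 0)) := by
        simp only [hpartial]
        exact Filter.Tendsto.sub tendsto_const_nhds hbT
      rw [sub_zero] at h1
      exact tendsto_nhds_unique ((hRsum.add hGsum).hasSum.tendsto_sum_nat) h1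
    have hJ : discJ (κ q) γ r μ₀ = (∑' t, R t) + ∑' t, G t := by
      rw [← Summable.tsum_add hRsum hGsum, hsum_b0, hb0]
    have hepsU : eps q = ∑' t, U t := by
      rw [heps q]
    have hGabs : |∑' t, G t| ≤ γ * eps q := by
      calc |∑' t, G t| = ‖∑' t, G t‖ := (Real.norm_eq_abs _).symm
        _ ≤ ∑' t, ‖G t‖ := norm_tsum_le_tsum_norm hGnorm
        _ ≤ ∑' t, γ * U t := Summable.tsum_le_tsum
            (fun t => by rw [Real.norm_eq_abs]; exact hGle t) hGnorm (hUsum.mul_left γ)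
        _ = γ * ∑' t, U t := tsum_mul_left
        _ = γ * eps q := by rw [hepsU]
    have htJq : tJ q = (∑' t, R t) - lam * eps q := by
      rw [htJ q, hepsU]
      have h1 : ∀ t : ℕ, γ ^ t * ∫ x, (r x - lam * u q x) ∂(marginal (η q) μ₀ t)
          = R t - lam * U t := by
        intro t
        rw [integral_sub (hint_r t) ((hint_u t).const_mul lam), integral_const_mul]
        simp only [hR, hU]
        ring
      rw [tsum_congr h1, Summable.tsum_sub hRsum (hUsum.mul_left lam), tsum_mul_left]
    rw [hJ, htJq]
    have h2 : (∑' t, R t) + (∑' t, G t) - ((∑' t, R t) - lam * eps q + lam * eps q)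
        = ∑' t, G t := by ring
    rw [h2]
    exact hGabs
  intro p
  have h1 := fact p
  have h2 := fact phat
  rw [abs_le] at h1 h2
  have h3 := hopt p
  have h4 : γ * eps phat ≤ lam * eps phat := mul_le_mul_of_nonneg_right hlam (heps0 phat)
  have h5 : (lam + γ) * eps p = lam * eps p + γ * eps p := by ring
  linarith [h1.1, h1.2, h2.1, h2.2]
end
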